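/- Let u, v, ũ, ṽ be complex numbers of absolute value 1. Then Φ_{A₂}(u,v) = Φ_{A₂}(ũ,ṽ) if and only if the pair (ũ,ṽ) is one of the six pairs (u,v), (v,u), (u,(uv)⁻¹), ((uv)⁻¹,u), (v,(uv)⁻¹), ((uv)⁻¹,v). -/

import Mathlib

/-- `Φ_{A₂}(u,v) = (u + v + (uv)⁻¹, u⁻¹ + v⁻¹ + uv)`. -/
noncomputable def PhiA2 (u v : ℂ) : ℂ × ℂ := (u + v + (u * v)⁻¹, u⁻¹ + v⁻¹ + u * v)

private lemma quadA2 {a b c d : ℂ} (hs : a + b = c + d) (hp : a * b = c * d) :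
    (a = c ∧ b = d) ∨ (a = d ∧ b = c) := by
  have h : (a - c) * (a - d) = 0 := by linear_combination a * hs - hp
  rcases mul_eq_zero.1 h with h | h
  · have hac : a = c := sub_eq_zero.1 h
    exact Or.inl ⟨hac, by linear_combination hs - hac⟩
  · have had : a = d := sub_eq_zero.1 h
    exact Or.inr ⟨had, by linear_combination hs - had⟩

/-- for unimodular `u, v, ũ, ṽ`, `Φ_{A₂}(u,v) = Φ_{A₂}(ũ,ṽ)` iff `(ũ,ṽ)`
is one of the six pairs `(u,v), (v,u), (u,(uv)⁻¹), ((uv)⁻¹,u), (v,(uv)⁻¹), ((uv)⁻¹,v)`. -/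
theorem stmt_14 (u v ut vt : ℂ) (hu : ‖u‖ = 1) (hv : ‖v‖ = 1)
    (hut : ‖ut‖ = 1) (hvt : ‖vt‖ = 1) :
    PhiA2 u v = PhiA2 ut vt ↔
      (ut, vt) = (u, v) ∨ (ut, vt) = (v, u) ∨ (ut, vt) = (u, (u * v)⁻¹)
        ∨ (ut, vt) = ((u * v)⁻¹, u) ∨ (ut, vt) = (v, (u * v)⁻¹)
        ∨ (ut, vt) = ((u * v)⁻¹, v) := by
  have hu0 : u ≠ 0 := by intro h; rw [h] at hu; simp at hu
  have hv0 : v ≠ 0 := by intro h; rw [h] at hv; simp at hv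
  have hut0 : ut ≠ 0 := by intro h; rw [h] at hut; simp at hut
  have hvt0 : vt ≠ 0 := by intro h; rw [h] at hvt; simp at hvt
  set w : ℂ := (u * v)⁻¹ with hwdef
  set wt : ℂ := (ut * vt)⁻¹ with hwtdef
  have hw : u * v * w = 1 := by rw [hwdef]; field_simp
  have hwt : ut * vt * wt = 1 := by rw [hwtdef]; field_simp
  have hw0 : w ≠ 0 := by intro h0; rw [h0] at hw; simp at hw
  constructor
  · intro h
    rw [PhiA2, PhiA2, Prod.mk.injEq] at h
    obtain ⟨h1, h2raw⟩ := h
    have eu : u⁻¹ = v * w := by rw [hwdef]; field_simp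
    have ev : v⁻¹ = u * w := by rw [hwdef]; field_simp
    have eut : ut⁻¹ = vt * wt := by rw [hwtdef]; field_simp
    have evt : vt⁻¹ = ut * wt := by rw [hwtdef]; field_simp
    rw [eu, ev, eut, evt] at h2raw
    have h2 : u * v + u * w + v * w = ut * vt + ut * wt + vt * wt := by
      linear_combination h2raw
    have hcut : (ut - u) * (ut - v) * (ut - w) = 0 := by
      linear_combination (-ut ^ 2) * h1 + ut * h2 - hw + hwt
    have hcvt : (vt - u) * (vt - v) * (vt - w) = 0 := by
      linear_combination (-vt ^ 2) * h1 + vt * h2 - hw + hwt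
    have hut3 : ut = u ∨ ut = v ∨ ut = w := by
      rcases mul_eq_zero.1 hcut with h' | h'
      · rcases mul_eq_zero.1 h' with h' | h'
        · exact Or.inl (sub_eq_zero.1 h')
        · exact Or.inr (Or.inl (sub_eq_zero.1 h'))
      · exact Or.inr (Or.inr (sub_eq_zero.1 h'))
    have hvt3 : vt = u ∨ vt = v ∨ vt = w := by
      rcases mul_eq_zero.1 hcvt with h' | h'
      · rcases mul_eq_zero.1 h' with h' | h'
        · exact Or.inl (sub_eq_zero.1 h')
        · exact Or.inr (Or.inl (sub_eq_zero.1 h'))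
      · exact Or.inr (Or.inr (sub_eq_zero.1 h'))
    have h1' : u + v + w = ut + vt + wt := by
      rw [hwdef, hwtdef]; exact h1
    rcases hut3 with h' | h' | h' <;> rcases hvt3 with h'' | h'' | h''
    · -- ut = u, vt = u
      have hp : u * wt = v * w := by
        apply mul_left_cancel₀ hu0
        linear_combination hwt - hw - u * wt * h' - ut * wt * h''
      have hs : u + wt = v + w := by linear_combination -h1' - h' - h''
      rcases quadA2 hs hp with ⟨h3, _⟩ | ⟨h3, _⟩
      · exact Or.inl (by rw [h', h'', h3])
      · exact Or.inr (Or.inr (Or.inr (Or.inl (by rw [h', h'', h3]))))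
    · exact Or.inl (by rw [h', h''])
    · exact Or.inr (Or.inr (Or.inl (by rw [h', h''])))
    · exact Or.inr (Or.inl (by rw [h', h'']))
    · -- ut = v, vt = v
      have hp : v * wt = u * w := by
        apply mul_left_cancel₀ hv0
        linear_combination hwt - hw - v * wt * h' - ut * wt * h''
      have hs : v + wt = u + w := by linear_combination -h1' - h' - h''
      rcases quadA2 hs hp with ⟨h3, _⟩ | ⟨h3, _⟩
      · exact Or.inl (by rw [h', h'', h3])
      · exact Or.inr (Or.inr (Or.inr (Or.inr (Or.inr (by rw [h', h'', h3])))))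
    · exact Or.inr (Or.inr (Or.inr (Or.inr (Or.inl (by rw [h', h''])))))
    · exact Or.inr (Or.inr (Or.inr (Or.inl (by rw [h', h'']))))
    · exact Or.inr (Or.inr (Or.inr (Or.inr (Or.inr (by rw [h', h''])))))
    · -- ut = w, vt = w
      have hp : w * wt = u * v := by
        apply mul_left_cancel₀ hw0
        linear_combination hwt - hw - w * wt * h' - ut * wt * h''
      have hs : w + wt = u + v := by linear_combination -h1' - h' - h''
      rcases quadA2 hs hp with ⟨h3, _⟩ | ⟨h3, _⟩
      · exact Or.inr (Or.inr (Or.inl (by rw [h', h'', h3])))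
      · exact Or.inr (Or.inr (Or.inr (Or.inr (Or.inr (by rw [h', h'', h3])))))
  · intro h
    rcases h with h | h | h | h | h | h <;>
      (rw [Prod.mk.injEq] at h; obtain ⟨rfl, rfl⟩ := h;
       simp only [PhiA2, Prod.mk.injEq, hwdef]) <;>
      constructor <;> (field_simp; try ring)
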